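/- In a dcpo (or domain) D in which the set T of total elements is Scott-open and totals are maximal (y ⊑ z with y ∈ T implies y = z), if ψ : D → E is Scott-continuous and ψ(x) ∈ T_E for some x, then there is a compact x₀ ⊑ x with ψ(x₀) = ψ(x). -/

import Mathlib

/-- In an algebraic domain in which the total elements form a Scott-open set of maximal
elements, a Scott-continuous map carrying `x` into the totals already carries some
compact approximation `x₀ ⊑ x` to the same value. -/
theorem compact_approx_total {D E : Type*} [CompleteLattice D] [CompleteLattice E]
    (TE : Set E)
    (hopen : ∀ S : Set E, S.Nonempty → DirectedOn (· ≤ ·) S → sSup S ∈ TE →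
      ∃ y ∈ S, y ∈ TE)
    (hmax : ∀ y ∈ TE, ∀ z : E, y ≤ z → y = z)
    (ψ : D → E) (hψ : ScottContinuous ψ)
    (x : D)
    (halg_ne : {k : D | IsCompactElement k ∧ k ≤ x}.Nonempty)
    (halg_dir : DirectedOn (· ≤ ·) {k : D | IsCompactElement k ∧ k ≤ x})
    (halg_sup : x = sSup {k : D | IsCompactElement k ∧ k ≤ x})
    (hx : ψ x ∈ TE) :
    ∃ x₀ : D, IsCompactElement x₀ ∧ x₀ ≤ x ∧ ψ x₀ = ψ x := by
  set K := {k : D | IsCompactElement k ∧ k ≤ x} with hK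
  have hcont : ψ x = sSup (ψ '' K) := by
    rw [halg_sup]
    exact ((hψ halg_ne halg_dir (isLUB_sSup K)).sSup_eq).symm
  have himg_ne : (ψ '' K).Nonempty := halg_ne.image ψ
  have himg_dir : DirectedOn (· ≤ ·) (ψ '' K) :=
    fun a ⟨p, hp, hpa⟩ b ⟨q, hq, hqb⟩ => by
      obtain ⟨r, hr, hpr, hqr⟩ := halg_dir p hp q hq
      exact ⟨ψ r, ⟨r, hr, rfl⟩, hpa ▸ hψ.monotone hpr, hqb ▸ hψ.monotone hqr⟩
  have hsup_mem : sSup (ψ '' K) ∈ TE := hcont ▸ hx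
  obtain ⟨y, ⟨k, hk, rfl⟩, hyT⟩ := hopen _ himg_ne himg_dir hsup_mem
  exact ⟨k, hk.1, hk.2, hmax _ hyT _ (hψ.monotone hk.2)⟩
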